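/- The pair (C, A) is output-stable (i.e., the series sum over all words v in F_d of ||C A^v x||^2 converges for every x in X) if and only if the generalized Stein inequality H - A_1* H A_1 - ... - A_d* H A_d >= C* C has a positive semidefinite bounded solution H. -/

import Mathlib

open ContinuousLinearMap

noncomputable section

variable {X Y : Type*}
  [NormedAddCommGroup X] [InnerProductSpace ℂ X] [CompleteSpace X]
  [NormedAddCommGroup Y] [InnerProductSpace ℂ Y] [CompleteSpace Y]

/-- `A^v`: for a word `v = i_N … i_1` (stored as the list `[i_N, …, i_1]`), the
product `A_{i_N} ∘ A_{i_{N-1}} ∘ ⋯ ∘ A_{i_1}`. -/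
def wordProd {d : ℕ} (A : Fin d → X →L[ℂ] X) (v : List (Fin d)) : X →L[ℂ] X :=
  (v.map A).prod

/-- `A^w` for a word of length `N` encoded as a function `w : Fin N → Fin d`. -/
def funProd {d N : ℕ} (A : Fin d → X →L[ℂ] X) (w : Fin N → Fin d) : X →L[ℂ] X :=
  wordProd A (List.ofFn w)

local notation "⟪" x ", " y "⟫" => @inner ℂ _ _ x y

lemma wordProd_cons {d : ℕ} (A : Fin d → X →L[ℂ] X) (j : Fin d) (v : List (Fin d)) :
    wordProd A (j :: v) = (A j) ∘L wordProd A v := by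
  simp [wordProd, List.prod_cons]; rfl

lemma wordProd_append_single {d : ℕ} (A : Fin d → X →L[ℂ] X) (v : List (Fin d)) (j : Fin d) :
    wordProd A (v ++ [j]) = (wordProd A v) ∘L A j := by
  simp [wordProd, List.prod_append]; rfl

lemma funProd_cons {d N : ℕ} (A : Fin d → X →L[ℂ] X) (j : Fin d) (w : Fin N → Fin d) :
    funProd A (Fin.cons j w) = (A j) ∘L funProd A w := by
  rw [funProd, List.ofFn_succ]
  simp [Fin.cons_succ, wordProd_cons, funProd]

set_option linter.unusedSectionVars false

open RCLike in
lemma stein_pointwise {d : ℕ} (A : Fin d → X →L[ℂ] X) (C : X →L[ℂ] Y) (H : X →L[ℂ] X)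
    (hD : (H - ∑ j, adjoint (A j) ∘L H ∘L A j - adjoint C ∘L C).IsPositive) (y : X) :
    ‖C y‖ ^ 2 + ∑ j, re ⟪H (A j y) , A j y⟫ ≤ re ⟪H y , y⟫ := by
  have h := hD.2 y
  rw [reApplyInnerSelf_apply] at h
  simp only [sub_apply, ContinuousLinearMap.sum_apply, comp_apply, inner_sub_left,
    sum_inner, adjoint_inner_left, map_sub, map_sum, inner_self_eq_norm_sq] at h
  linarith

open RCLike in
lemma backward_summable {d : ℕ} (A : Fin d → X →L[ℂ] X) (C : X →L[ℂ] Y) (H : X →L[ℂ] X)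
    (hH : H.IsPositive)
    (hD : (H - ∑ j, adjoint (A j) ∘L H ∘L A j - adjoint C ∘L C).IsPositive) (x : X) :
    Summable fun v : List (Fin d) => ‖C (wordProd A v x)‖ ^ 2 := by
  have hg : ∀ y : X, 0 ≤ re ⟪H y , y⟫ := by
    intro y
    have := hH.2 y
    rwa [reApplyInnerSelf_apply] at this
  set S : ℕ → ℝ := fun n => ∑ w : Fin n → Fin d, re ⟪H (funProd A w x) , funProd A w x⟫ with hSdef
  set T : ℕ → ℝ := fun n => ∑ w : Fin n → Fin d, ‖C (funProd A w x)‖ ^ 2 with hTdef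
  have hS0 : ∀ n, 0 ≤ S n := fun n => Finset.sum_nonneg fun w _ => hg _
  have key : ∀ n, T n + S (n + 1) ≤ S n := by
    intro n
    have hSsucc : S (n + 1) =
        ∑ w : Fin n → Fin d, ∑ j, re ⟪H (A j (funProd A w x)) , A j (funProd A w x)⟫ := by
      simp only [hSdef]
      rw [← Fintype.sum_equiv (Fin.consEquiv (fun _ : Fin (n+1) => Fin d))
        (fun p => re ⟪H (funProd A (Fin.cons p.1 p.2) x) , funProd A (Fin.cons p.1 p.2) x⟫)
        (fun w => re ⟪H (funProd A w x) , funProd A w x⟫) (fun p => by rfl)]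
      rw [Fintype.sum_prod_type]
      rw [Finset.sum_comm]
      simp [funProd_cons]
    rw [hSsucc, hTdef, ← Finset.sum_add_distrib]
    exact Finset.sum_le_sum fun w _ => stein_pointwise A C H hD (funProd A w x)
  have bound : ∀ N, (∑ n ∈ Finset.range N, T n) ≤ S 0 := by
    intro N
    have : ∀ N, (∑ n ∈ Finset.range N, T n) + S N ≤ S 0 := by
      intro N
      induction N with
      | zero => simp
      | succ N ih =>
        rw [Finset.sum_range_succ]
        have := key N
        linarith
    have h := this N
    have := hS0 N
    linarith
  -- transfer along the equiv with sigma types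
  set σ := (List.equivSigmaTuple : List (Fin d) ≃ Σ n, Fin n → Fin d) with hσ
  rw [← Equiv.summable_iff σ.symm]
  apply summable_of_sum_le (c := S 0)
  · intro p
    simp only [Function.comp_apply]
    positivity
  · intro u
    set N := u.sup Sigma.fst + 1 with hN
    have hsub : u ⊆ (Finset.range N).sigma fun n => (Finset.univ : Finset (Fin n → Fin d)) := by
      intro p hp
      rw [Finset.mem_sigma]
      exact ⟨Finset.mem_range.2 (Nat.lt_succ_of_le (Finset.le_sup (f := Sigma.fst) hp)),
        Finset.mem_univ _⟩
    calc ∑ p ∈ u, ((fun v : List (Fin d) => ‖C (wordProd A v x)‖ ^ 2) ∘ σ.symm) p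
        ≤ ∑ p ∈ (Finset.range N).sigma fun n => (Finset.univ : Finset (Fin n → Fin d)),
            ((fun v : List (Fin d) => ‖C (wordProd A v x)‖ ^ 2) ∘ σ.symm) p :=
          Finset.sum_le_sum_of_subset_of_nonneg hsub (fun p _ _ => by simp only [Function.comp_apply]; positivity)
      _ = ∑ n ∈ Finset.range N, T n := by
          rw [Finset.sum_sigma]
          refine Finset.sum_congr rfl fun n _ => Finset.sum_congr rfl fun w _ => ?_
          simp [hσ, List.equivSigmaTuple, funProd, hTdef]
      _ ≤ S 0 := bound N

lemma fwd_summable_inner {d : ℕ} (A : Fin d → X →L[ℂ] X) (C : X →L[ℂ] Y) {x y : X}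
    (hx : Summable fun v : List (Fin d) => ‖C (wordProd A v x)‖ ^ 2)
    (hy : Summable fun v : List (Fin d) => ‖C (wordProd A v y)‖ ^ 2) :
    Summable fun v : List (Fin d) => ⟪C (wordProd A v x) , C (wordProd A v y)⟫ := by
  apply Summable.of_norm_bounded ((hx.add hy).div_const 2)
  intro v
  have h1 := norm_inner_le_norm (𝕜 := ℂ) (C (wordProd A v x)) (C (wordProd A v y))
  have h2 := sq_nonneg (‖C (wordProd A v x)‖ - ‖C (wordProd A v y)‖)
  nlinarith [norm_nonneg (C (wordProd A v x)), norm_nonneg (C (wordProd A v y))]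

lemma fwd_exists_bound {d : ℕ} (A : Fin d → X →L[ℂ] X) (C : X →L[ℂ] Y)
    (hS : ∀ x : X, Summable fun v : List (Fin d) => ‖C (wordProd A v x)‖ ^ 2) (x : X) :
    ∃ c : ℝ, ∀ y : X, ‖∑' v : List (Fin d), ⟪C (wordProd A v x) , C (wordProd A v y)⟫‖ ≤ c * ‖y‖ := by
  classical
  set φ : Finset (List (Fin d)) → X →L[ℂ] ℂ :=
    fun F => ∑ v ∈ F, ((innerSL ℂ (C (wordProd A v x))).comp (C ∘L wordProd A v)) with hφ
  have hφapp : ∀ F y, φ F y = ∑ v ∈ F, ⟪C (wordProd A v x) , C (wordProd A v y)⟫ := by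
    intro F y
    rw [hφ]
    simp
  have hpt : ∀ y : X, ∃ c : ℝ, ∀ F, ‖φ F y‖ ≤ c := by
    intro y
    refine ⟨(∑' v : List (Fin d), (‖C (wordProd A v x)‖ ^ 2 + ‖C (wordProd A v y)‖ ^ 2) / 2),
      fun F => ?_⟩
    rw [hφapp]
    calc ‖∑ v ∈ F, ⟪C (wordProd A v x) , C (wordProd A v y)⟫‖
        ≤ ∑ v ∈ F, ‖⟪C (wordProd A v x) , C (wordProd A v y)⟫‖ := norm_sum_le _ _
      _ ≤ ∑ v ∈ F, (‖C (wordProd A v x)‖ ^ 2 + ‖C (wordProd A v y)‖ ^ 2) / 2 := by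
          refine Finset.sum_le_sum fun v _ => ?_
          have h1 := norm_inner_le_norm (𝕜 := ℂ) (C (wordProd A v x)) (C (wordProd A v y))
          nlinarith [sq_nonneg (‖C (wordProd A v x)‖ - ‖C (wordProd A v y)‖),
            norm_nonneg (C (wordProd A v x)), norm_nonneg (C (wordProd A v y))]
      _ ≤ ∑' v : List (Fin d), (‖C (wordProd A v x)‖ ^ 2 + ‖C (wordProd A v y)‖ ^ 2) / 2 := by
          refine Summable.sum_le_tsum F (fun v _ => by positivity) ?_
          exact ((hS x).add (hS y)).div_const 2
  obtain ⟨c', hc'⟩ := banach_steinhaus hpt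
  refine ⟨c', fun y => ?_⟩
  have hsum := (fwd_summable_inner A C (hS x) (hS y)).hasSum
  refine le_of_tendsto hsum.norm (Filter.Eventually.of_forall fun F => ?_)
  calc ‖∑ v ∈ F, ⟪C (wordProd A v x) , C (wordProd A v y)⟫‖ = ‖φ F y‖ := by rw [hφapp]
    _ ≤ ‖φ F‖ * ‖y‖ := (φ F).le_opNorm y
    _ ≤ c' * ‖y‖ := by
        have := hc' F
        have := norm_nonneg y
        nlinarith [norm_nonneg (φ F)]

def bL {d : ℕ} (A : Fin d → X →L[ℂ] X) (C : X →L[ℂ] Y)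
    (hS : ∀ x : X, Summable fun v : List (Fin d) => ‖C (wordProd A v x)‖ ^ 2) (x : X) :
    X →ₗ[ℂ] ℂ where
  toFun y := ∑' v : List (Fin d), ⟪C (wordProd A v x) , C (wordProd A v y)⟫
  map_add' y z := by
    rw [← Summable.tsum_add (fwd_summable_inner A C (hS x) (hS y)) (fwd_summable_inner A C (hS x) (hS z))]
    exact tsum_congr fun v => by rw [map_add, map_add, inner_add_right]
  map_smul' c y := by
    simp only [RingHom.id_apply, map_smul, inner_smul_right]
    exact tsum_mul_left

def Hfun {d : ℕ} (A : Fin d → X →L[ℂ] X) (C : X →L[ℂ] Y)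
    (hS : ∀ x : X, Summable fun v : List (Fin d) => ‖C (wordProd A v x)‖ ^ 2) (x : X) : X :=
  (InnerProductSpace.toDual ℂ X).symm
    ((bL A C hS x).mkContinuousOfExistsBound (fwd_exists_bound A C hS x))

lemma Hfun_inner {d : ℕ} (A : Fin d → X →L[ℂ] X) (C : X →L[ℂ] Y)
    (hS : ∀ x : X, Summable fun v : List (Fin d) => ‖C (wordProd A v x)‖ ^ 2) (x y : X) :
    ⟪Hfun A C hS x , y⟫ = ∑' v : List (Fin d), ⟪C (wordProd A v x) , C (wordProd A v y)⟫ := by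
  rw [Hfun, InnerProductSpace.toDual_symm_apply]
  rfl

lemma fwd_decomp {d : ℕ} (A : Fin d → X →L[ℂ] X) (C : X →L[ℂ] Y)
    (hS : ∀ x : X, Summable fun v : List (Fin d) => ‖C (wordProd A v x)‖ ^ 2) (x : X) :
    (∑' v : List (Fin d), ‖C (wordProd A v x)‖ ^ 2) =
      ‖C x‖ ^ 2 + ∑ j, ∑' v : List (Fin d), ‖C (wordProd A v (A j x))‖ ^ 2 := by
  classical
  set f : List (Fin d) → ℝ := fun v => ‖C (wordProd A v x)‖ ^ 2 with hf
  have h0 : f [] = ‖C x‖ ^ 2 := by simp [hf, wordProd]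
  set ι : Fin d × List (Fin d) → List (Fin d) := fun p => p.2 ++ [p.1] with hι'
  have hι : Function.Injective ι := by
    rintro ⟨j, w⟩ ⟨j', w'⟩ h
    simp only [hι'] at h
    have h2 := congrArg List.reverse h
    simp only [List.reverse_append, List.reverse_singleton, List.singleton_append,
      List.cons.injEq, List.reverse_inj] at h2
    simp [Prod.ext_iff, h2.1, h2.2]
  have hsupp : Function.support (fun v => if v = [] then 0 else f v) ⊆ Set.range ι := by
    intro v hv
    rw [Function.mem_support] at hv
    have hvne : v ≠ [] := by
      intro h
      simp [h] at hv
    exact ⟨(v.getLast hvne, v.dropLast), List.dropLast_append_getLast hvne⟩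
  have hsm : Summable (fun v => if v = [] then 0 else f v) := by
    refine Summable.of_nonneg_of_le (fun v => ?_) (fun v => ?_) (hS x)
    · split <;> positivity
    · split
      · positivity
      · exact le_refl _
  have hite : ∀ p : Fin d × List (Fin d),
      (if ι p = [] then (0:ℝ) else f (ι p)) = f (ι p) := fun p => if_neg (by simp [hι'])
  calc ∑' v, f v = f [] + ∑' v, if v = [] then 0 else f v := Summable.tsum_eq_add_tsum_ite (hS x) []
    _ = ‖C x‖ ^ 2 + ∑ j, ∑' w : List (Fin d), f (w ++ [j]) := by
        rw [h0]
        congr 1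
        rw [← hι.tsum_eq hsupp]
        rw [tsum_congr hite]
        have hsm2 : Summable fun p : Fin d × List (Fin d) => f (ι p) := by
          have := (hι.summable_iff
            (fun v hv => by by_contra h; exact hv (hsupp h))).2 hsm
          exact this.congr hite
        rw [Summable.tsum_prod' hsm2 (fun j => hsm2.prod_factor j), tsum_fintype]
    _ = ‖C x‖ ^ 2 + ∑ j, ∑' v : List (Fin d), ‖C (wordProd A v (A j x))‖ ^ 2 := by
        congr 1
        refine Finset.sum_congr rfl fun j _ => tsum_congr fun w => ?_
        rw [hf]
        simp [wordProd_append_single]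

open RCLike in
lemma fwd_main {d : ℕ} (A : Fin d → X →L[ℂ] X) (C : X →L[ℂ] Y)
    (hS : ∀ x : X, Summable fun v : List (Fin d) => ‖C (wordProd A v x)‖ ^ 2) :
    ∃ H : X →L[ℂ] X, H.IsPositive ∧
      (H - ∑ j, adjoint (A j) ∘L H ∘L A j - adjoint C ∘L C).IsPositive := by
  classical
  have hsi : ∀ x y : X, Summable fun v : List (Fin d) =>
      ⟪C (wordProd A v x) , C (wordProd A v y)⟫ :=
    fun x y => fwd_summable_inner A C (hS x) (hS y)
  have hb := Hfun_inner A C hS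
  -- additivity and homogeneity of Hfun
  have hadd : ∀ x x' : X, Hfun A C hS (x + x') = Hfun A C hS x + Hfun A C hS x' := by
    intro x x'
    refine ext_inner_right ℂ fun y => ?_
    rw [hb, inner_add_left, hb, hb, ← Summable.tsum_add (hsi x y) (hsi x' y)]
    exact tsum_congr fun v => by rw [map_add, map_add, inner_add_left]
  have hsmul : ∀ (c : ℂ) (x : X), Hfun A C hS (c • x) = c • Hfun A C hS x := by
    intro c x
    refine ext_inner_right ℂ fun y => ?_
    rw [hb, inner_smul_left, hb]
    have : ∀ v : List (Fin d), ⟪C (wordProd A v (c • x)) , C (wordProd A v y)⟫ =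
        (starRingEnd ℂ) c * ⟪C (wordProd A v x) , C (wordProd A v y)⟫ := by
      intro v
      rw [map_smul, map_smul, inner_smul_left]
    rw [tsum_congr this]
    exact tsum_mul_left
  set Hlin : X →ₗ[ℂ] X :=
    { toFun := Hfun A C hS, map_add' := hadd, map_smul' := hsmul } with hHlin
  have hsym : Hlin.IsSymmetric := by
    intro x y
    have conj_tsum : (starRingEnd ℂ) (∑' v : List (Fin d),
        ⟪C (wordProd A v y) , C (wordProd A v x)⟫) =
        ∑' v : List (Fin d), (starRingEnd ℂ) ⟪C (wordProd A v y) , C (wordProd A v x)⟫ :=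
      ((hsi y x).hasSum.map (starRingEnd ℂ).toAddMonoidHom continuous_star).tsum_eq.symm
    calc ⟪Hlin x , y⟫ = ∑' v : List (Fin d), ⟪C (wordProd A v x) , C (wordProd A v y)⟫ := hb x y
      _ = ∑' v : List (Fin d), (starRingEnd ℂ) ⟪C (wordProd A v y) , C (wordProd A v x)⟫ :=
          tsum_congr fun v => (inner_conj_symm _ _).symm
      _ = (starRingEnd ℂ) (∑' v : List (Fin d),
            ⟪C (wordProd A v y) , C (wordProd A v x)⟫) := conj_tsum.symm
      _ = (starRingEnd ℂ) ⟪Hlin y , x⟫ := congrArg _ (hb y x).symm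
      _ = ⟪x , Hlin y⟫ := inner_conj_symm _ _
  have hcont : Continuous Hlin := hsym.continuous
  set Hc : X →L[ℂ] X := ⟨Hlin, hcont⟩ with hHc
  have hsa : IsSelfAdjoint Hc := isSelfAdjoint_iff_isSymmetric.mpr hsym
  have hQ : ∀ x : X, re ⟪Hc x , x⟫ = ∑' v : List (Fin d), ‖C (wordProd A v x)‖ ^ 2 := by
    intro x
    have h1 : HasSum (fun v : List (Fin d) => ⟪C (wordProd A v x) , C (wordProd A v x)⟫)
        ⟪Hc x , x⟫ := by
      rw [show ⟪Hc x , x⟫ = ∑' v : List (Fin d), ⟪C (wordProd A v x) , C (wordProd A v x)⟫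
        from hb x x]
      exact (hsi x x).hasSum
    have h2 := h1.mapL (reCLM : ℂ →L[ℝ] ℝ)
    have h3 : HasSum (fun v : List (Fin d) => ‖C (wordProd A v x)‖ ^ 2) (re ⟪Hc x , x⟫) := by
      refine h2.congr_fun fun v => ?_
      simp [inner_self_eq_norm_sq]
      norm_cast
    exact h3.tsum_eq.symm
  refine ⟨Hc, ⟨hsym, fun x => ?_⟩, ⟨?_, fun x => ?_⟩⟩
  · rw [reApplyInnerSelf_apply, hQ]
    exact tsum_nonneg fun v => by positivity
  · -- self-adjointness of the Stein operator
    have hsum : IsSelfAdjoint (∑ j, adjoint (A j) ∘L Hc ∘L A j) := by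
      rw [IsSelfAdjoint, star_sum]
      exact Finset.sum_congr rfl fun j _ => hsa.adjoint_conj (A j)
    have hCC : IsSelfAdjoint (adjoint C ∘L C) := by
      rw [IsSelfAdjoint, star_eq_adjoint, adjoint_comp, adjoint_adjoint]
    exact isSelfAdjoint_iff_isSymmetric.mp ((hsa.sub hsum).sub hCC)
  · rw [reApplyInnerSelf_apply]
    have hcomp : re ⟪(Hc - ∑ j, adjoint (A j) ∘L Hc ∘L A j - adjoint C ∘L C) x , x⟫ =
        re ⟪Hc x , x⟫ - (∑ j, re ⟪Hc ((A j) x) , (A j) x⟫) - ‖C x‖ ^ 2 := by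
      simp only [sub_apply, ContinuousLinearMap.sum_apply, comp_apply, inner_sub_left,
        sum_inner, adjoint_inner_left, map_sub, map_sum, inner_self_eq_norm_sq]
    rw [hcomp]
    have := fwd_decomp A C hS x
    rw [hQ x]
    have hAj : ∀ j, re ⟪Hc ((A j) x) , (A j) x⟫ =
        ∑' v : List (Fin d), ‖C (wordProd A v ((A j) x))‖ ^ 2 := fun j => hQ ((A j) x)
    rw [Finset.sum_congr rfl fun j _ => hAj j]
    linarith

/-- The pair (C, A) is output-stable iff the generalized Stein inequality
`H - ∑_j A_j* H A_j ≥ C* C` has a positive semidefinite bounded solution. -/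
theorem stmt2 {d : ℕ} (A : Fin d → X →L[ℂ] X) (C : X →L[ℂ] Y) :
    (∀ x : X, Summable fun v : List (Fin d) => ‖C (wordProd A v x)‖ ^ 2) ↔
      ∃ H : X →L[ℂ] X, H.IsPositive ∧
        (H - ∑ j, adjoint (A j) ∘L H ∘L A j - adjoint C ∘L C).IsPositive := by
  constructor
  · exact fun hS => fwd_main A C hS
  · rintro ⟨H, hH, hD⟩ x
    exact backward_summable A C H hH hD x

end
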